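/- arXiv:1001.4703 — 2 statements merged into one kernel-verified Lean document; each statement's English description precedes it below -/
import Mathlib

section
/- The function x ↦ log x + 1/x is nondecreasing on [1, ∞). Consequently, if Q is a symmetric n×n matrix with eigenvalues ≥ 0 and A, V are n×k matrices with orthonormal columns where V's columns are eigenvectors of Q for its k largest eigenvalues, then log det(AᵀQA + I_k) + Tr((AᵀQA + I_k)⁻¹) ≤ log det(VᵀQV + I_k) + Tr((VᵀQV + I_k)⁻¹). -/
open Matrix Set


lemma pem_one_sub_mul {m n p : ℕ} (g : Fin m → Fin n) (N : Matrix (Fin n) (Fin p) ℝ) :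
    ((1 : Matrix (Fin n) (Fin n) ℝ).submatrix g id) * N = N.submatrix g id := by
  ext a b
  simp [Matrix.mul_apply, Matrix.one_apply]

lemma pem_mul_one_sub {m n p : ℕ} (g : Fin m → Fin n) (N : Matrix (Fin p) (Fin n) ℝ) :
    N * ((1 : Matrix (Fin n) (Fin n) ℝ).submatrix id g) = N.submatrix id g := by
  ext a b
  simp [Matrix.mul_apply, Matrix.one_apply]

lemma pem_sandwich {m n : ℕ} (g : Fin m → Fin n) (hg : Function.Injective g) (d : Fin n → ℝ) :
    ((1 : Matrix (Fin n) (Fin n) ℝ).submatrix g id) * Matrix.diagonal d *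
      ((1 : Matrix (Fin n) (Fin n) ℝ).submatrix id g) = Matrix.diagonal (d ∘ g) := by
  rw [pem_one_sub_mul, pem_mul_one_sub, Matrix.submatrix_submatrix]
  simpa using Matrix.submatrix_diagonal d g hg

lemma pem_sub_mul_sub {m n : ℕ} (g : Fin m → Fin n) (hg : Function.Injective g) :
    ((1 : Matrix (Fin n) (Fin n) ℝ).submatrix g id) *
      ((1 : Matrix (Fin n) (Fin n) ℝ).submatrix id g) = 1 := by
  have := pem_sandwich g hg (fun _ => 1)
  simpa [Function.comp_def, Matrix.diagonal_one] using this

lemma pem_quad {m p : ℕ} (G : Matrix (Fin m) (Fin p) ℝ) (N : Matrix (Fin m) (Fin m) ℝ)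
    (v w : Fin p → ℝ) :
    (G *ᵥ v) ⬝ᵥ (N *ᵥ (G *ᵥ w)) = v ⬝ᵥ ((Gᵀ * N * G) *ᵥ w) := by
  rw [← Matrix.vecMul_transpose, ← Matrix.dotProduct_mulVec, Matrix.mulVec_mulVec,
    Matrix.mulVec_mulVec]

lemma pem_diag_quad {n : ℕ} (d : Fin n → ℝ) (v : Fin n → ℝ) :
    v ⬝ᵥ (Matrix.diagonal d *ᵥ v) = ∑ i, d i * v i ^ 2 := by
  simp only [dotProduct, Matrix.mulVec_diagonal, sq]
  exact Finset.sum_congr rfl fun i _ => by ring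

lemma pem_interlace {n k : ℕ} (hkn : k ≤ n) (lam : Fin n → ℝ) (hlam : Antitone lam)
    (B : Matrix (Fin n) (Fin k) ℝ) (hB : Bᵀ * B = 1)
    (W : Matrix (Fin k) (Fin k) ℝ) (hW1 : W * Wᵀ = 1) (hW2 : Wᵀ * W = 1)
    (ν : Fin k → ℝ) (hν : Antitone ν)
    (hM : Bᵀ * Matrix.diagonal lam * B = W * Matrix.diagonal ν * Wᵀ)
    (i : Fin k) : ν i ≤ lam (Fin.castLE hkn i) := by
  have hik : (i : ℕ) + 1 ≤ k := i.2
  have hin : (i : ℕ) ≤ n := le_trans (le_of_lt i.2) hkn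
  set g1 : Fin ((i : ℕ) + 1) → Fin k := Fin.castLE hik with hg1
  set g2 : Fin (i : ℕ) → Fin n := Fin.castLE hin with hg2
  have hg1inj : Function.Injective g1 := Fin.castLE_injective hik
  set E : Matrix (Fin k) (Fin ((i : ℕ) + 1)) ℝ :=
    (1 : Matrix (Fin k) (Fin k) ℝ).submatrix id g1 with hE
  set G : Matrix (Fin n) (Fin ((i : ℕ) + 1)) ℝ := B * W * E with hG
  set P : Matrix (Fin (i : ℕ)) (Fin ((i : ℕ) + 1)) ℝ := G.submatrix g2 id with hP
  -- find a nonzero kernel vector of P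
  have hnotinj : ¬ Function.Injective P.mulVecLin := by
    intro h
    have := LinearMap.finrank_le_finrank_of_injective h
    simp [Module.finrank_fin_fun] at this
  obtain ⟨c₁, c₂, heq, hne⟩ := Function.not_injective_iff.mp hnotinj
  set c := c₁ - c₂ with hc
  have hc0 : c ≠ 0 := sub_ne_zero.mpr hne
  have hPc : P *ᵥ c = 0 := by
    have : P.mulVecLin (c₁ - c₂) = 0 := by rw [map_sub, heq, sub_self]
    simpa [Matrix.mulVecLin_apply] using this
  -- transpose facts
  have hEt : Eᵀ = (1 : Matrix (Fin k) (Fin k) ℝ).submatrix g1 id := by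
    rw [hE, Matrix.transpose_submatrix, Matrix.transpose_one]
  -- G-quadratic forms
  have hcancelW : ∀ {p : ℕ} (X : Matrix (Fin k) (Fin p) ℝ), Wᵀ * (W * X) = X := by
    intro p X; rw [← Matrix.mul_assoc, hW2, Matrix.one_mul]
  have hBD : ∀ {p : ℕ} (X : Matrix (Fin k) (Fin p) ℝ),
      Bᵀ * (Matrix.diagonal lam * (B * X)) = W * (Matrix.diagonal ν * (Wᵀ * X)) := by
    intro p X
    calc Bᵀ * (Matrix.diagonal lam * (B * X)) = (Bᵀ * Matrix.diagonal lam * B) * X := by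
          simp only [Matrix.mul_assoc]
      _ = W * (Matrix.diagonal ν * (Wᵀ * X)) := by rw [hM]; simp only [Matrix.mul_assoc]
  have hGtG : Gᵀ * G = 1 := by
    rw [hG]
    simp only [Matrix.transpose_mul, Matrix.mul_assoc]
    have h1 : ∀ {p : ℕ} (X : Matrix (Fin k) (Fin p) ℝ), Bᵀ * (B * X) = X := by
      intro p X; rw [← Matrix.mul_assoc, hB, Matrix.one_mul]
    rw [h1, hcancelW, hEt]
    exact pem_sub_mul_sub g1 hg1inj
  have hGtDG : Gᵀ * Matrix.diagonal lam * G = Matrix.diagonal (ν ∘ g1) := by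
    rw [hG]
    simp only [Matrix.transpose_mul, Matrix.mul_assoc]
    rw [hBD, hcancelW, hcancelW, hEt, ← Matrix.mul_assoc]
    exact pem_sandwich g1 hg1inj ν
  set y : Fin n → ℝ := G *ᵥ c with hy
  -- y vanishes on first i coordinates
  have hyzero : ∀ j : Fin n, (j : ℕ) < (i : ℕ) → y j = 0 := by
    intro j hj
    have h2 : g2 ⟨(j : ℕ), hj⟩ = j := rfl
    have h3 := congrFun hPc ⟨(j : ℕ), hj⟩
    simp only [hP, Matrix.mulVec, Pi.zero_apply] at h3
    have h4 : (fun t => P ⟨(j : ℕ), hj⟩ t) = (fun t => G j t) := by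
      funext t; simp [hP, Matrix.submatrix_apply, h2]
    simp only [hy, Matrix.mulVec]
    calc (fun j => G j ⬝ᵥ c) j = P ⟨(j : ℕ), hj⟩ ⬝ᵥ c := by
          congr 1
      _ = 0 := h3
  have hdotsq : ∀ {p : ℕ} (v : Fin p → ℝ), v ⬝ᵥ v = ∑ s, v s ^ 2 := by
    intro p v; simp [dotProduct, sq]
  have hyy : y ⬝ᵥ y = c ⬝ᵥ c := by
    have h := pem_quad G 1 c c
    simpa [Matrix.one_mulVec, Matrix.mul_one, hGtG] using h
  have hq : y ⬝ᵥ (Matrix.diagonal lam *ᵥ y) = ∑ s, ν (g1 s) * c s ^ 2 := by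
    rw [hy, pem_quad, hGtDG, pem_diag_quad]
    rfl
  have hcc : 0 < c ⬝ᵥ c := by
    rw [hdotsq]
    obtain ⟨s, hs⟩ := Function.ne_iff.mp hc0
    exact Finset.sum_pos' (fun t _ => sq_nonneg _)
      ⟨s, Finset.mem_univ s, lt_of_le_of_ne (sq_nonneg _) (Ne.symm (pow_ne_zero 2 hs))⟩
  have hlow : ν i * (c ⬝ᵥ c) ≤ y ⬝ᵥ (Matrix.diagonal lam *ᵥ y) := by
    rw [hq, hdotsq, Finset.mul_sum]
    refine Finset.sum_le_sum fun s _ => ?_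
    have hle : g1 s ≤ i := by
      rw [Fin.le_def]
      exact Nat.lt_succ_iff.mp s.2
    exact mul_le_mul_of_nonneg_right (hν hle) (sq_nonneg _)
  have hup : y ⬝ᵥ (Matrix.diagonal lam *ᵥ y) ≤ lam (Fin.castLE hkn i) * (c ⬝ᵥ c) := by
    rw [pem_diag_quad, ← hyy, hdotsq, Finset.mul_sum]
    refine Finset.sum_le_sum fun j _ => ?_
    by_cases hj : (j : ℕ) < (i : ℕ)
    · rw [hyzero j hj]; simp
    · have hle : Fin.castLE hkn i ≤ j := by
        rw [Fin.le_def]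
        exact Nat.le_of_not_lt hj
      exact mul_le_mul_of_nonneg_right (hlam hle) (sq_nonneg _)
  exact le_of_mul_le_mul_right (hlow.trans hup) hcc



lemma pem_value {k : ℕ} (W : Matrix (Fin k) (Fin k) ℝ) (hW1 : W * Wᵀ = 1) (hW2 : Wᵀ * W = 1)
    (ν : Fin k → ℝ) (hν : ∀ i, 0 ≤ ν i) :
    Real.log (W * Matrix.diagonal ν * Wᵀ + 1).det + (W * Matrix.diagonal ν * Wᵀ + 1)⁻¹.trace
      = ∑ i, (Real.log (1 + ν i) + 1 / (1 + ν i)) := by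
  have hpos : ∀ i, (0:ℝ) < 1 + ν i := fun i => by linarith [hν i]
  have key : W * Matrix.diagonal ν * Wᵀ + 1 = W * Matrix.diagonal (fun i => 1 + ν i) * Wᵀ := by
    have hd : Matrix.diagonal (fun i => 1 + ν i) = 1 + Matrix.diagonal ν := by
      rw [← Matrix.diagonal_one, ← Matrix.diagonal_add]
    rw [hd, Matrix.mul_add, Matrix.add_mul, Matrix.mul_one, hW1, add_comm]
  have hdetWW : W.det * Wᵀ.det = 1 := by rw [← Matrix.det_mul, hW1, Matrix.det_one]
  have hdet : (W * Matrix.diagonal ν * Wᵀ + 1).det = ∏ i, (1 + ν i) := by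
    rw [key, Matrix.det_mul, Matrix.det_mul, Matrix.det_diagonal]
    calc W.det * (∏ i, (1 + ν i)) * Wᵀ.det = W.det * Wᵀ.det * ∏ i, (1 + ν i) := by ring
      _ = ∏ i, (1 + ν i) := by rw [hdetWW, one_mul]
  have hcancelW : ∀ (X : Matrix (Fin k) (Fin k) ℝ), Wᵀ * (W * X) = X := by
    intro X; rw [← Matrix.mul_assoc, hW2, Matrix.one_mul]
  have hinv : (W * Matrix.diagonal ν * Wᵀ + 1)⁻¹
      = W * Matrix.diagonal (fun i => (1 + ν i)⁻¹) * Wᵀ := by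
    rw [key]
    apply Matrix.inv_eq_right_inv
    calc (W * Matrix.diagonal (fun i => 1 + ν i) * Wᵀ) *
          (W * Matrix.diagonal (fun i => (1 + ν i)⁻¹) * Wᵀ)
        = W * (Matrix.diagonal (fun i => 1 + ν i) *
            (Wᵀ * (W * (Matrix.diagonal (fun i => (1 + ν i)⁻¹) * Wᵀ)))) := by
          simp only [Matrix.mul_assoc]
      _ = W * (Matrix.diagonal (fun i => 1 + ν i) *
            (Matrix.diagonal (fun i => (1 + ν i)⁻¹) * Wᵀ)) := by rw [hcancelW]
      _ = W * Wᵀ := by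
          rw [← Matrix.mul_assoc (Matrix.diagonal _), Matrix.diagonal_mul_diagonal]
          have : (fun i => (1 + ν i) * (1 + ν i)⁻¹) = fun _ => (1:ℝ) := by
            funext i; exact mul_inv_cancel₀ (ne_of_gt (hpos i))
          rw [this, Matrix.diagonal_one, Matrix.one_mul]
      _ = 1 := hW1
  have htr : (W * Matrix.diagonal ν * Wᵀ + 1)⁻¹.trace = ∑ i, (1 + ν i)⁻¹ := by
    rw [hinv, Matrix.trace_mul_cycle, hW2, Matrix.one_mul, Matrix.trace_diagonal]
  rw [hdet, htr, Real.log_prod (fun i _ => ne_of_gt (hpos i)), Finset.sum_add_distrib]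
  simp [one_div]

lemma pem_mono : MonotoneOn (fun x : ℝ => Real.log x + 1 / x) (Ici 1) := by
  have heq : (fun x : ℝ => Real.log x + 1 / x) = fun x : ℝ => Real.log x + x⁻¹ := by
    funext x; rw [one_div]
  rw [heq]
  apply monotoneOn_of_deriv_nonneg (convex_Ici 1)
  · apply ContinuousOn.add
    · exact Real.continuousOn_log.mono fun x hx => by
        simp only [mem_compl_iff, mem_singleton_iff]
        intro h; rw [h] at hx; exact absurd (mem_Ici.mp hx) (by norm_num)
    · exact ContinuousOn.inv₀ continuousOn_id fun x hx => by
        have := mem_Ici.mp hx; intro h; rw [h] at this; exact absurd this (by norm_num)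
  · intro x hx
    rw [interior_Ici] at hx
    have hx0 : x ≠ 0 := ne_of_gt (lt_trans one_pos hx)
    exact ((Real.differentiableAt_log hx0).add (differentiableAt_inv hx0)).differentiableWithinAt
  · intro x hx
    rw [interior_Ici] at hx
    have hx1 : (1:ℝ) < x := hx
    have hx0 : x ≠ 0 := ne_of_gt (lt_trans one_pos hx1)
    have hd := ((Real.hasDerivAt_log hx0).add (hasDerivAt_inv hx0)).deriv
    rw [show deriv (fun x => Real.log x + x⁻¹) x = x⁻¹ + -(x ^ 2)⁻¹ from hd]
    have h1 : (x ^ 2)⁻¹ ≤ x⁻¹ := by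
      apply inv_anti₀ (by positivity)
      nlinarith
    linarith

/-- The map `x ↦ log x + 1/x` is nondecreasing on `[1,∞)`. Consequently, if `Q` is a
symmetric positive semidefinite `n×n` matrix, diagonalized as `Q = U D Uᵀ` with `U`
orthogonal and eigenvalues `lam` sorted decreasingly, `A` is any `n×k` matrix with
orthonormal columns and `V = U(:,1..k)` consists of eigenvectors for the `k` largest
eigenvalues, then
`log det(AᵀQA + I) + Tr((AᵀQA + I)⁻¹) ≤ log det(VᵀQV + I) + Tr((VᵀQV + I)⁻¹)`. -/

theorem principal_eigenvectors_maximize (n k : ℕ) (hkn : k ≤ n)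
    (Q U : Matrix (Fin n) (Fin n) ℝ) (lam : Fin n → ℝ)
    (hU : Uᵀ * U = 1) (hQ : Q = U * Matrix.diagonal lam * Uᵀ)
    (hlam_anti : Antitone lam) (hlam_nonneg : ∀ i, 0 ≤ lam i)
    (A : Matrix (Fin n) (Fin k) ℝ) (hA : Aᵀ * A = 1)
    (V : Matrix (Fin n) (Fin k) ℝ) (hV : V = U.submatrix id (Fin.castLE hkn)) :
    MonotoneOn (fun x : ℝ => Real.log x + 1 / x) (Ici 1) ∧
      Real.log (Aᵀ * Q * A + 1).det + (Aᵀ * Q * A + 1)⁻¹.trace ≤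
        Real.log (Vᵀ * Q * V + 1).det + (Vᵀ * Q * V + 1)⁻¹.trace := by
  refine ⟨pem_mono, ?_⟩
  have hU' : U * Uᵀ = 1 := mul_eq_one_comm.mp hU
  set B := Uᵀ * A with hBdef
  have hB : Bᵀ * B = 1 := by
    rw [hBdef, Matrix.transpose_mul, Matrix.transpose_transpose]
    calc Aᵀ * U * (Uᵀ * A) = Aᵀ * (U * Uᵀ) * A := by simp only [Matrix.mul_assoc]
      _ = 1 := by rw [hU', Matrix.mul_one, hA]
  have hMrep : Aᵀ * Q * A = Bᵀ * Matrix.diagonal lam * B := by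
    rw [hQ, hBdef, Matrix.transpose_mul, Matrix.transpose_transpose]
    simp only [Matrix.mul_assoc]
  set M := Bᵀ * Matrix.diagonal lam * B with hMdef
  have hMpsd : M.PosSemidef := by
    have hdpsd : (Matrix.diagonal lam).PosSemidef :=
      Matrix.posSemidef_diagonal_iff.mpr hlam_nonneg
    have h := hdpsd.mul_mul_conjTranspose_same Bᵀ
    rwa [Matrix.conjTranspose_eq_transpose_of_trivial, Matrix.transpose_transpose] at h
  have hMh : M.IsHermitian := hMpsd.isHermitian
  set W : Matrix (Fin k) (Fin k) ℝ := ↑(hMh.eigenvectorUnitary) with hWdef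
  set μ : Fin k → ℝ := hMh.eigenvalues with hμdef
  have hμ0 : ∀ i, 0 ≤ μ i := hMpsd.eigenvalues_nonneg
  have hWmem := hMh.eigenvectorUnitary.2
  have hW1 : W * Wᵀ = 1 := by
    have h := Matrix.mem_unitaryGroup_iff.mp hWmem
    rwa [Matrix.star_eq_conjTranspose, Matrix.conjTranspose_eq_transpose_of_trivial] at h
  have hW2 : Wᵀ * W = 1 := by
    have h := Matrix.mem_unitaryGroup_iff'.mp hWmem
    rwa [Matrix.star_eq_conjTranspose, Matrix.conjTranspose_eq_transpose_of_trivial] at h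
  have hspec : M = W * Matrix.diagonal μ * Wᵀ := by
    have h := hMh.spectral_theorem
    rw [Unitary.conjStarAlgAut_apply] at h
    rwa [Matrix.star_eq_conjTranspose, Matrix.conjTranspose_eq_transpose_of_trivial,
      show (RCLike.ofReal ∘ hMh.eigenvalues : Fin k → ℝ) = μ from funext fun i => rfl] at h
  set σ := Tuple.sort (fun j => -μ j) with hσdef
  set ν : Fin k → ℝ := μ ∘ σ with hνdef
  have hνanti : Antitone ν := by
    intro a b hab
    have h := Tuple.monotone_sort (fun j => -μ j) hab
    simp only [Function.comp_apply, neg_le_neg_iff] at h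
    simpa [hνdef] using h
  have hν0 : ∀ i, 0 ≤ ν i := fun i => hμ0 _
  set S := (1 : Matrix (Fin k) (Fin k) ℝ).submatrix σ id with hSdef
  set T := (1 : Matrix (Fin k) (Fin k) ℝ).submatrix id σ with hTdef
  have hST : S * T = 1 := pem_sub_mul_sub σ σ.injective
  have hTS : T * S = 1 := by
    have hTeq : T = (1 : Matrix (Fin k) (Fin k) ℝ).submatrix (σ.symm : Fin k → Fin k) id := by
      ext a b
      simp only [hTdef, Matrix.submatrix_apply, Matrix.one_apply, id_eq]
      by_cases h : a = σ b
      · simp [h]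
      · have h' : ¬ σ.symm a = b := fun hh => h (by rw [← hh, Equiv.apply_symm_apply])
        simp [h, h']
    have hSeq : S = (1 : Matrix (Fin k) (Fin k) ℝ).submatrix id (σ.symm : Fin k → Fin k) := by
      ext a b
      simp only [hSdef, Matrix.submatrix_apply, Matrix.one_apply, id_eq]
      by_cases h : σ a = b
      · have h' : σ.symm b = a := by rw [← h, Equiv.symm_apply_apply]
        simp [h, h']
      · have h' : ¬ a = σ.symm b := fun hh => h (by rw [hh, Equiv.apply_symm_apply])
        simp [h, h']
    rw [hTeq, hSeq]
    exact pem_sub_mul_sub (σ.symm : Fin k → Fin k) σ.symm.injective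
  have hsand := pem_sandwich (σ : Fin k → Fin k) σ.injective μ
  have hdiagμ : Matrix.diagonal μ = T * Matrix.diagonal ν * S := by
    have hmain : T * (S * Matrix.diagonal μ * T) * S = Matrix.diagonal μ := by
      calc T * (S * Matrix.diagonal μ * T) * S
          = (T * S) * (Matrix.diagonal μ * (T * S)) := by simp only [Matrix.mul_assoc]
        _ = Matrix.diagonal μ := by rw [hTS, Matrix.one_mul, Matrix.mul_one]
    rw [← hmain, hSdef, hTdef]
    rw [show (1 : Matrix (Fin k) (Fin k) ℝ).submatrix σ id * Matrix.diagonal μ *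
        (1 : Matrix (Fin k) (Fin k) ℝ).submatrix id σ = Matrix.diagonal ν from hsand]
  set W' := W * T with hW'def
  have hTt : Tᵀ = S := by
    rw [hTdef, hSdef, Matrix.transpose_submatrix, Matrix.transpose_one]
  have hW'T : W'ᵀ = S * Wᵀ := by rw [hW'def, Matrix.transpose_mul, hTt]
  have hW'1 : W' * W'ᵀ = 1 := by
    rw [hW'def, hW'T]
    calc W * T * (S * Wᵀ) = W * (T * S) * Wᵀ := by simp only [Matrix.mul_assoc]
      _ = 1 := by rw [hTS, Matrix.mul_one, hW1]
  have hW'2 : W'ᵀ * W' = 1 := by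
    rw [hW'def, hW'T]
    calc S * Wᵀ * (W * T) = S * (Wᵀ * W) * T := by simp only [Matrix.mul_assoc]
      _ = 1 := by rw [hW2, Matrix.mul_one, hST]
  have hspec' : M = W' * Matrix.diagonal ν * W'ᵀ := by
    rw [hspec, hdiagμ, hW'def, hW'T]
    simp only [Matrix.mul_assoc]
  have hint : ∀ i : Fin k, ν i ≤ lam (Fin.castLE hkn i) := fun i =>
    pem_interlace hkn lam hlam_anti B hB W' hW'1 hW'2 ν hνanti hspec' i
  have hcU : ∀ {p : ℕ} (X : Matrix (Fin n) (Fin p) ℝ), Uᵀ * (U * X) = X := by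
    intro p X; rw [← Matrix.mul_assoc, hU, Matrix.one_mul]
  have hVQV : Vᵀ * Q * V = Matrix.diagonal (fun i => lam (Fin.castLE hkn i)) := by
    rw [hV, hQ, show U.submatrix id (Fin.castLE hkn)
        = U * (1 : Matrix (Fin n) (Fin n) ℝ).submatrix id (Fin.castLE hkn) from
        (pem_mul_one_sub _ U).symm,
      Matrix.transpose_mul, Matrix.transpose_submatrix, Matrix.transpose_one]
    simp only [Matrix.mul_assoc]
    rw [hcU, hcU, ← Matrix.mul_assoc]
    exact pem_sandwich _ (Fin.castLE_injective hkn) lam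
  have hLHS : Real.log (Aᵀ * Q * A + 1).det + (Aᵀ * Q * A + 1)⁻¹.trace
      = ∑ i, (Real.log (1 + ν i) + 1 / (1 + ν i)) := by
    rw [show Aᵀ * Q * A = W' * Matrix.diagonal ν * W'ᵀ from hMrep.trans hspec']
    exact pem_value W' hW'1 hW'2 ν hν0
  have hRHS : Real.log (Vᵀ * Q * V + 1).det + (Vᵀ * Q * V + 1)⁻¹.trace
      = ∑ i, (Real.log (1 + lam (Fin.castLE hkn i)) + 1 / (1 + lam (Fin.castLE hkn i))) := by
    have h1 := pem_value 1 (by simp) (by simp)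
      (fun i => lam (Fin.castLE hkn i)) (fun i => hlam_nonneg _)
    rw [hVQV]
    simpa [Matrix.transpose_one, Matrix.one_mul, Matrix.mul_one] using h1
  rw [hLHS, hRHS]
  apply Finset.sum_le_sum
  intro i _
  have h1 : (1:ℝ) + ν i ∈ Ici (1:ℝ) := by
    simp only [mem_Ici]; linarith [hν0 i]
  have h2 : (1:ℝ) + lam (Fin.castLE hkn i) ∈ Ici (1:ℝ) := by
    simp only [mem_Ici]; linarith [hlam_nonneg (Fin.castLE hkn i)]
  exact pem_mono h1 h2 (by linarith [hint i])
end

section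
/- Let F be a distribution function with bounded support contained in [0, M]. Define b(x) = ∫ dF(t)/(t + x) for x > 0 (the Stieltjes transform evaluated at -x). Then ∫ log(1+t) dF(t) = ∫_1^∞ (1/t - b(t)) dt. -/
open MeasureTheory Set Filter

lemma aux_hasDeriv (t : ℝ) (ht : 0 ≤ t) :
    ∀ x ∈ Ici (1:ℝ), HasDerivAt (fun y => Real.log y - Real.log (t + y))
      (x⁻¹ - (t + x)⁻¹) x := by
  intro x hx
  have hx0 : (0:ℝ) < x := lt_of_lt_of_le one_pos hx
  have htx : (0:ℝ) < t + x := by linarith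
  have h1 := Real.hasDerivAt_log (ne_of_gt hx0)
  have h2 : HasDerivAt (fun y : ℝ => Real.log (t + y)) (1 / (t + x)) x := by
    simpa using ((hasDerivAt_id x).const_add t).log (ne_of_gt htx)
  have := h1.sub h2
  rw [one_div] at this
  exact this

lemma aux_nonneg (t : ℝ) (ht : 0 ≤ t) :
    ∀ x ∈ Ioi (1:ℝ), 0 ≤ x⁻¹ - (t + x)⁻¹ := by
  intro x hx
  have hx0 : (0:ℝ) < x := lt_trans one_pos hx
  have htx : (0:ℝ) < t + x := by linarith
  have : (t + x)⁻¹ ≤ x⁻¹ := by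
    apply inv_anti₀ hx0 (by linarith)
  linarith

lemma aux_tendsto (t : ℝ) (ht : 0 ≤ t) :
    Tendsto (fun y => Real.log y - Real.log (t + y)) atTop (nhds 0) := by
  have h0 : Tendsto (fun y : ℝ => t + y) atTop atTop :=
    tendsto_atTop_add_const_left _ t tendsto_id
  have h1 : Tendsto (fun y : ℝ => t * (t + y)⁻¹) atTop (nhds 0) := by
    have := (tendsto_inv_atTop_zero.comp h0).const_mul t
    simpa using this
  have h2 : Tendsto (fun y : ℝ => 1 - t * (t + y)⁻¹) atTop (nhds 1) := by
    simpa using (tendsto_const_nhds (x := (1:ℝ))).sub h1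
  have h3 : Tendsto (fun y : ℝ => Real.log (1 - t * (t + y)⁻¹)) atTop
      (nhds (Real.log 1)) :=
    ((Real.continuousAt_log one_ne_zero).tendsto).comp h2
  rw [Real.log_one] at h3
  apply h3.congr'
  filter_upwards [eventually_gt_atTop (0:ℝ)] with y hy
  have hty : (0:ℝ) < t + y := by linarith
  have : 1 - t * (t + y)⁻¹ = y / (t + y) := by field_simp; ring
  rw [this, Real.log_div (ne_of_gt hy) (ne_of_gt hty)]

lemma aux_integral (t : ℝ) (ht : 0 ≤ t) :
    ∫ x in Ioi (1:ℝ), (x⁻¹ - (t + x)⁻¹) = Real.log (1 + t) := by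
  rw [integral_Ioi_of_hasDerivAt_of_nonneg' (aux_hasDeriv t ht) (aux_nonneg t ht)
    (aux_tendsto t ht)]
  rw [Real.log_one]
  ring_nf

lemma aux_integrableOn (t : ℝ) (ht : 0 ≤ t) :
    IntegrableOn (fun x => x⁻¹ - (t + x)⁻¹) (Ioi (1:ℝ)) :=
  integrableOn_Ioi_deriv_of_nonneg' (aux_hasDeriv t ht) (aux_nonneg t ht) (aux_tendsto t ht)

/-- If `μ` is a probability measure on `ℝ` supported in `[0,M]`, with Stieltjes-type
transform `b(x) = ∫ (t+x)⁻¹ dμ(t)` for `x > 0`, then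
`∫ log(1+t) dμ(t) = ∫_1^∞ (1/x - b(x)) dx`. -/
theorem log_moment_eq_integral_stieltjes (M : ℝ) (hM : 0 ≤ M)
    (μ : Measure ℝ) [IsProbabilityMeasure μ] (hsupp : μ (Icc 0 M)ᶜ = 0) :
    (∫ t, Real.log (1 + t) ∂μ) =
      ∫ x in Ioi (1 : ℝ), (1 / x - ∫ t, (t + x)⁻¹ ∂μ) := by
  have hae : ∀ᵐ t ∂μ, t ∈ Icc 0 M := by
    rw [ae_iff]
    simpa [compl_def] using hsupp
  -- the two-variable integrand
  set f : ℝ → ℝ → ℝ := fun t x => x⁻¹ - (t + x)⁻¹ with hf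
  -- joint integrability
  have hmeas : AEStronglyMeasurable (Function.uncurry f) (μ.prod (volume.restrict (Ioi 1))) := by
    apply Measurable.aestronglyMeasurable
    exact (measurable_snd.inv).sub ((measurable_fst.add measurable_snd).inv)
  have hlogint : Integrable (fun t => Real.log (1 + t)) μ := by
    refine Integrable.mono' (integrable_const (Real.log (1 + M)))
      (Real.measurable_log.comp (measurable_const.add measurable_id)).aestronglyMeasurable ?_
    filter_upwards [hae] with t htI
    rw [Real.norm_eq_abs, abs_of_nonneg (Real.log_nonneg (by linarith [htI.1]))]
    exact Real.log_le_log (by linarith [htI.1]) (by linarith [htI.2])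
  have hint : Integrable (Function.uncurry f) (μ.prod (volume.restrict (Ioi 1))) := by
    rw [integrable_prod_iff hmeas]
    constructor
    · filter_upwards [hae] with t htI
      exact aux_integrableOn t htI.1
    · apply hlogint.congr
      filter_upwards [hae] with t htI
      have h1 : ∫ x in Ioi (1:ℝ), ‖f t x‖ = ∫ x in Ioi (1:ℝ), f t x := by
        apply setIntegral_congr_fun measurableSet_Ioi
        intro x hx
        exact Real.norm_of_nonneg (aux_nonneg t htI.1 x hx)
      simp only [Function.uncurry_apply_pair]
      rw [h1, aux_integral t htI.1]
  -- Fubini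
  have hswap := integral_integral_swap (f := f) hint
  calc (∫ t, Real.log (1 + t) ∂μ) = ∫ t, (∫ x in Ioi (1:ℝ), f t x) ∂μ := by
        apply integral_congr_ae
        filter_upwards [hae] with t htI
        rw [aux_integral t htI.1]
    _ = ∫ x in Ioi (1:ℝ), ∫ t, f t x ∂μ := hswap
    _ = ∫ x in Ioi (1 : ℝ), (1 / x - ∫ t, (t + x)⁻¹ ∂μ) := by
        apply setIntegral_congr_fun measurableSet_Ioi
        intro x hx
        have hx0 : (0:ℝ) < x := lt_trans one_pos hx
        have hinteg : Integrable (fun t => (t + x)⁻¹) μ := by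
          refine Integrable.mono' (integrable_const (1:ℝ))
            ((measurable_id.add_const x).inv).aestronglyMeasurable ?_
          filter_upwards [hae] with t htI
          have htx : (0:ℝ) < t + x := by linarith [htI.1]
          rw [Real.norm_eq_abs, abs_of_nonneg (le_of_lt (inv_pos.mpr htx))]
          have h2 : (t + x)⁻¹ ≤ (1:ℝ)⁻¹ := inv_anti₀ one_pos (by linarith [htI.1, le_of_lt (mem_Ioi.mp hx)])
          simpa using h2
        rw [hf]
        simp only
        rw [integral_sub (integrable_const _) hinteg, integral_const]
        simp [one_div]
end
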